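/- For any integers n, k with 0 < k < n and any p ∈ [0,1] with 0 < p < 1, one has e^{−1/(12k) − 1/(12(n−k))} < B_p(k|n) · √(2π·k(n−k)/n) · 2^{n·D(k/n ‖ p)} < 1, where B_p(k|n) := C(n,k)·p^k·(1−p)^{n−k} and D(q‖p) := q·log(q/p) + (1−q)·log((1−q)/(1−p)) with binary logarithm. -/

import Mathlib

open Real

open Stirling Filter Topology
open scoped Nat

noncomputable def dS (n : ℕ) : ℝ := Real.log (stirlingSeq n) - Real.log (Real.sqrt π)

lemma dS_diff (m : ℕ) :
    dS (m+1) - dS (m+2) = Real.log (stirlingSeq (m+1)) - Real.log (stirlingSeq (m+2)) := by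
  simp [dS]

lemma g_lower (m : ℕ) :
    1 / (12 * ((m:ℝ)+1) + 1) - 1 / (12 * ((m:ℝ)+2) + 1)
      ≤ dS (m+1) - dS (m+2) := by
  have h := log_stirlingSeq_diff_hasSum m
  have h0 := le_hasSum h 0 (fun i _ => by positivity)
  rw [dS_diff]
  refine le_trans ?_ h0
  push_cast
  have hm : (0:ℝ) ≤ (m:ℝ) := Nat.cast_nonneg m
  have he : (1:ℝ) / (2 * 1 + 1) * ((1 / (2 * ((m:ℝ) + 1) + 1)) ^ 2) ^ 1
      = 1 / (3 * (2 * (m:ℝ) + 3)^2) := by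
    have h : (2 * (m:ℝ) + 3) ≠ 0 := by positivity
    field_simp; ring
  rw [he, div_sub_div _ _ (by positivity) (by positivity),
    div_le_div_iff₀ (by positivity) (by positivity)]
  nlinarith [sq_nonneg ((m:ℝ)), hm]

lemma g_upper (m : ℕ) :
    dS (m+1) - dS (m+2) ≤ 1 / (12 * ((m:ℝ)+1)) - 1 / (12 * ((m:ℝ)+2)) := by
  have h := log_stirlingSeq_diff_hasSum m
  set x2 : ℝ := (1 / (2 * (↑(m + 1) : ℝ) + 1)) ^ 2 with hx2
  have hden : (0:ℝ) < 2 * (↑(m + 1) : ℝ) + 1 := by positivity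
  have hx2pos : 0 < x2 := by positivity
  have hx2lt : x2 < 1 := by
    rw [hx2]
    refine pow_lt_one₀ (by positivity) ?_ (by norm_num)
    rw [div_lt_one hden]
    push_cast; nlinarith [Nat.cast_nonneg (α := ℝ) m]
  have hgeo : HasSum (fun k : ℕ => (x2/3) * x2 ^ k) ((x2/3) / (1 - x2)) :=
    (hasSum_geometric_of_lt_one hx2pos.le hx2lt).mul_left _
  have hgeo' : HasSum (fun k : ℕ => (1/3) * x2 ^ (k+1)) ((x2/3) / (1 - x2)) := by
    refine hgeo.congr_fun fun k => by ring
  have hle : dS (m+1) - dS (m+2) ≤ (x2/3) / (1 - x2) := by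
    rw [dS_diff]
    refine hasSum_le (fun k => ?_) h hgeo'
    have h3 : (1:ℝ) / (2 * (↑(k + 1):ℝ) + 1) ≤ 1/3 := by
      apply div_le_div_of_nonneg_left one_pos.le (by norm_num)
      push_cast; nlinarith [Nat.cast_nonneg (α := ℝ) k]
    exact mul_le_mul_of_nonneg_right h3 (pow_nonneg hx2pos.le _)
  refine hle.trans (le_of_eq ?_)
  rw [hx2]
  push_cast
  have hm : (0:ℝ) ≤ (m:ℝ) := Nat.cast_nonneg m
  have h : (2 * ((m:ℝ)+1) + 1) ≠ 0 := by positivity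
  have h1 : (1:ℝ) - (1 / (2 * ((m:ℝ) + 1) + 1)) ^ 2 ≠ 0 := by
    have : ((1:ℝ) / (2 * ((m:ℝ) + 1) + 1)) ^ 2 < 1 := by
      refine pow_lt_one₀ (by positivity) ?_ (by norm_num)
      rw [div_lt_one (by positivity)]; nlinarith
    nlinarith
  have h2 : (12 * ((m:ℝ)+1)) ≠ 0 := by positivity
  have h3 : (12 * ((m:ℝ)+2)) ≠ 0 := by positivity
  rw [div_sub_div _ _ h2 h3, div_div, div_eq_div_iff
    (mul_ne_zero (by norm_num) h1) (mul_ne_zero h2 h3)]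
  field_simp
  ring


lemma tendsto_dS : Tendsto dS atTop (𝓝 0) := by
  have hπ : (0:ℝ) < Real.sqrt π := Real.sqrt_pos.mpr Real.pi_pos
  have h1 : Tendsto (fun n => Real.log (stirlingSeq n)) atTop (𝓝 (Real.log (Real.sqrt π))) :=
    ((Real.continuousAt_log hπ.ne').tendsto).comp tendsto_stirlingSeq_sqrt_pi
  have := h1.sub_const (Real.log (Real.sqrt π))
  show Tendsto (fun n => Real.log (stirlingSeq n) - Real.log (Real.sqrt π)) atTop (𝓝 0)
  simpa using this

lemma teles_upper (m N : ℕ) :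
    dS (m+1) - dS (m+1+N) ≤ 1/(12*((m:ℝ)+1)) - 1/(12*((m:ℝ)+1+N)) := by
  induction N with
  | zero => simp
  | succ N ih =>
    have h := g_upper (m + N)
    have heq : dS (m+1) - dS (m+1+(N+1)) = (dS (m+1) - dS (m+1+N)) + (dS ((m+N)+1) - dS ((m+N)+2)) := by
      have e1 : m+1+(N+1) = (m+N)+2 := by omega
      have e2 : m+1+N = (m+N)+1 := by omega
      rw [e1, e2]; ring
    rw [heq]
    push_cast at h ⊢
    ring_nf at h ih ⊢
    linarith

lemma teles_lower (m N : ℕ) :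
    1/(12*((m:ℝ)+1)+1) - 1/(12*((m:ℝ)+1+N)+1) ≤ dS (m+1) - dS (m+1+N) := by
  induction N with
  | zero => simp
  | succ N ih =>
    have h := g_lower (m + N)
    have heq : dS (m+1) - dS (m+1+(N+1)) = (dS (m+1) - dS (m+1+N)) + (dS ((m+N)+1) - dS ((m+N)+2)) := by
      have e1 : m+1+(N+1) = (m+N)+2 := by omega
      have e2 : m+1+N = (m+N)+1 := by omega
      rw [e1, e2]; ring
    rw [heq]
    push_cast at h ⊢
    ring_nf at h ih ⊢
    linarith

lemma tendsto_aux (m : ℕ) (c : ℝ) :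
    Tendsto (fun N : ℕ => 1/(12*((m:ℝ)+1+N)+c)) atTop (𝓝 0) := by
  simp only [one_div]
  apply Tendsto.inv_tendsto_atTop
  have h0 : Tendsto (fun N : ℕ => ((m:ℝ)+1) + (N:ℝ)) atTop atTop :=
    tendsto_atTop_add_const_left atTop ((m:ℝ)+1)
      (tendsto_natCast_atTop_atTop : Tendsto (fun N : ℕ => (N:ℝ)) atTop atTop)
  have h1 : Tendsto (fun N : ℕ => 12*((m:ℝ)+1+N)) atTop atTop := by
    have := Tendsto.const_mul_atTop (by norm_num : (0:ℝ) < 12) h0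
    simpa [add_assoc] using this
  exact tendsto_atTop_add_const_right _ c h1

lemma dS_tail_tendsto (m : ℕ) : Tendsto (fun N : ℕ => dS (m+1+N)) atTop (𝓝 0) := by
  have := tendsto_dS.comp (tendsto_add_atTop_nat (m+1))
  simpa [Function.comp_def, Nat.add_comm] using this

lemma dS_le (m : ℕ) : dS (m+1) ≤ 1/(12*((m:ℝ)+1)) := by
  have key : ∀ N : ℕ, dS (m+1) ≤ 1/(12*((m:ℝ)+1)) - 1/(12*((m:ℝ)+1+N)) + dS (m+1+N) := by
    intro N; linarith [teles_upper m N]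
  have htend : Tendsto (fun N : ℕ => 1/(12*((m:ℝ)+1)) - 1/(12*((m:ℝ)+1+N)) + dS (m+1+N))
      atTop (𝓝 (1/(12*((m:ℝ)+1)))) := by
    have h1 : Tendsto (fun N : ℕ => 1/(12*((m:ℝ)+1+N))) atTop (𝓝 0) := by
      simpa using tendsto_aux m 0
    simpa using ((tendsto_const_nhds.sub h1).add (dS_tail_tendsto m))
  exact ge_of_tendsto' htend key

lemma dS_ge (m : ℕ) : 1/(12*((m:ℝ)+1)+1) ≤ dS (m+1) := by
  have key : ∀ N : ℕ, 1/(12*((m:ℝ)+1)+1) - 1/(12*((m:ℝ)+1+N)+1) + dS (m+1+N) ≤ dS (m+1) := by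
    intro N; linarith [teles_lower m N]
  have htend : Tendsto (fun N : ℕ => 1/(12*((m:ℝ)+1)+1) - 1/(12*((m:ℝ)+1+N)+1) + dS (m+1+N))
      atTop (𝓝 (1/(12*((m:ℝ)+1)+1))) := by
    simpa using ((tendsto_const_nhds.sub (tendsto_aux m 1)).add (dS_tail_tendsto m))
  exact le_of_tendsto' htend key

lemma dS_pos (m : ℕ) : 0 < dS (m+1) := by
  have := dS_ge m
  have h : (0:ℝ) < 1/(12*((m:ℝ)+1)+1) := by positivity
  linarith

lemma dS_ge' (n : ℕ) (hn : 0 < n) : 1/(12*(n:ℝ)+1) ≤ dS n := by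
  obtain ⟨m, rfl⟩ := Nat.exists_eq_succ_of_ne_zero hn.ne'
  have := dS_ge m
  push_cast at this ⊢
  linarith

lemma dS_le' (n : ℕ) (hn : 0 < n) : dS n ≤ 1/(12*(n:ℝ)) := by
  obtain ⟨m, rfl⟩ := Nat.exists_eq_succ_of_ne_zero hn.ne'
  have := dS_le m
  push_cast at this ⊢
  linarith

lemma fact_eq (n : ℕ) (hn : 0 < n) :
    (n ! : ℝ) = Real.sqrt (2*π*n) * ((n:ℝ) / Real.exp 1)^n * Real.exp (dS n) := by
  obtain ⟨m, rfl⟩ := Nat.exists_eq_succ_of_ne_zero hn.ne'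
  have hs : 0 < stirlingSeq (m+1) := stirlingSeq'_pos m
  have hπ : (0:ℝ) < Real.sqrt π := Real.sqrt_pos.mpr Real.pi_pos
  have hexp : Real.exp (dS (m+1)) = stirlingSeq (m+1) / Real.sqrt π := by
    rw [dS, Real.exp_sub, Real.exp_log hs, Real.exp_log hπ]
  have hsqrt : Real.sqrt (2*π*(m+1:ℕ)) = Real.sqrt (2*(m+1:ℕ)) * Real.sqrt π := by
    rw [← Real.sqrt_mul (by positivity)]
    ring_nf
  rw [hexp, hsqrt, stirlingSeq]
  have h1 : (0:ℝ) < Real.sqrt (2*(m+1:ℕ)) := by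
    apply Real.sqrt_pos.mpr; positivity
  have h2 : (0:ℝ) < ((m+1:ℕ):ℝ) / Real.exp 1 := by positivity
  field_simp

/-- The probability of exactly `k` successes in `n` independent Bernoulli trials
with success probability `p`. -/
noncomputable def bernoulliProb (p : ℝ) (k n : ℕ) : ℝ :=
  (n.choose k : ℝ) * p ^ k * (1 - p) ^ (n - k)

/-- The binary Kullback–Leibler divergence `D(q‖p)` (binary logarithm). -/
noncomputable def klBin (q p : ℝ) : ℝ :=
  q * Real.logb 2 (q / p) + (1 - q) * Real.logb 2 ((1 - q) / (1 - p))

lemma rpow_logb_mul (a : ℕ) (x : ℝ) (hx : 0 < x) :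
    (2:ℝ) ^ ((a:ℝ) * Real.logb 2 x) = x ^ a := by
  rw [mul_comm, Real.rpow_mul (by norm_num), Real.rpow_logb (by norm_num) (by norm_num) hx,
    Real.rpow_natCast]

lemma main_eq (n k : ℕ) (hk : 0 < k) (hkn : k < n) (p : ℝ) (hp0 : 0 < p) (hp1 : p < 1) :
    bernoulliProb p k n * Real.sqrt (2 * π * (k:ℝ) * ((n - k : ℕ):ℝ) / (n:ℝ)) *
      (2:ℝ) ^ ((n:ℝ) * klBin ((k:ℝ)/(n:ℝ)) p) = Real.exp (dS n - dS k - dS (n-k)) := by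
  have hp1' : (0:ℝ) < 1 - p := by linarith
  have hK : (0:ℝ) < (k:ℝ) := by exact_mod_cast hk
  have hM : (0:ℝ) < ((n-k:ℕ):ℝ) := by
    have : 0 < n - k := by omega
    exact_mod_cast this
  have hN : (0:ℝ) < (n:ℝ) := by
    have : 0 < n := by omega
    exact_mod_cast this
  have hKM : (k:ℝ) + ((n-k:ℕ):ℝ) = (n:ℝ) := by
    have : k + (n - k) = n := by omega
    exact_mod_cast congrArg (Nat.cast : ℕ → ℝ) this
  set K : ℝ := (k:ℝ)
  set M : ℝ := ((n-k:ℕ):ℝ)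
  set N : ℝ := (n:ℝ)
  have hE : (0:ℝ) < Real.exp 1 := Real.exp_pos 1
  -- exponent simplification
  have hq : 1 - K/N = M/N := by field_simp; linarith
  have hkl : N * klBin (K/N) p
      = K * Real.logb 2 (K/(N*p)) + M * Real.logb 2 (M/(N*(1-p))) := by
    rw [klBin, hq, div_div, div_div]
    set L1 := Real.logb 2 (K/(N*p))
    set L2 := Real.logb 2 (M/(N*(1-p)))
    field_simp
  have hpow : (2:ℝ) ^ (N * klBin (K/N) p) = (K/(N*p))^k * (M/(N*(1-p)))^(n-k) := by
    rw [hkl, Real.rpow_add (by norm_num : (0:ℝ) < 2),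
      rpow_logb_mul k _ (by positivity), rpow_logb_mul (n-k) _ (by positivity)]
  -- combine with bernoulliProb
  have e1 : p^k * (K/(N*p))^k = (K/N)^k := by
    rw [← mul_pow]; congr 1; field_simp
  have e2 : (1-p)^(n-k) * (M/(N*(1-p)))^(n-k) = (M/N)^(n-k) := by
    rw [← mul_pow]; congr 1; field_simp
  -- factorial identity
  have hsq : Real.sqrt (2*π*N) * Real.sqrt (2*π*K*M/N)
      = Real.sqrt (2*π*K) * Real.sqrt (2*π*M) := by
    rw [← Real.sqrt_mul (by positivity), ← Real.sqrt_mul (by positivity)]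
    congr 1
    field_simp
  have hpowN : (N/Real.exp 1)^n = (N/Real.exp 1)^k * (N/Real.exp 1)^(n-k) := by
    rw [← pow_add, Nat.add_sub_cancel' hkn.le]
  have hNK : (N/Real.exp 1)^k * (K/N)^k = (K/Real.exp 1)^k := by
    rw [← mul_pow]; congr 1; field_simp
  have hNM : (N/Real.exp 1)^(n-k) * (M/N)^(n-k) = (M/Real.exp 1)^(n-k) := by
    rw [← mul_pow]; congr 1; field_simp
  have hexp : Real.exp (dS k) * Real.exp (dS (n-k)) * Real.exp (dS n - dS k - dS (n-k))
      = Real.exp (dS n) := by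
    rw [← Real.exp_add, ← Real.exp_add]; ring_nf
  have hfact : (n ! : ℝ) * (K/N)^k * (M/N)^(n-k) * Real.sqrt (2*π*K*M/N)
      = (k ! : ℝ) * ((n-k)! : ℝ) * Real.exp (dS n - dS k - dS (n-k)) := by
    rw [fact_eq n (by omega), fact_eq k hk, fact_eq (n-k) (by omega)]
    calc Real.sqrt (2*π*N) * (N/Real.exp 1)^n * Real.exp (dS n) * (K/N)^k * (M/N)^(n-k)
          * Real.sqrt (2*π*K*M/N)
        = (Real.sqrt (2*π*N) * Real.sqrt (2*π*K*M/N)) * ((N/Real.exp 1)^k * (K/N)^k)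
          * ((N/Real.exp 1)^(n-k) * (M/N)^(n-k)) * Real.exp (dS n) := by
          rw [hpowN]; ring
      _ = (Real.sqrt (2*π*K) * Real.sqrt (2*π*M)) * (K/Real.exp 1)^k * (M/Real.exp 1)^(n-k)
          * (Real.exp (dS k) * Real.exp (dS (n-k)) * Real.exp (dS n - dS k - dS (n-k))) := by
          rw [hsq, hNK, hNM, hexp]
      _ = Real.sqrt (2*π*K) * (K/Real.exp 1)^k * Real.exp (dS k)
          * (Real.sqrt (2*π*M) * (M/Real.exp 1)^(n-k) * Real.exp (dS (n-k)))
          * Real.exp (dS n - dS k - dS (n-k)) := by ring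
  -- assemble
  have hchoose : (n.choose k : ℝ) = (n ! : ℝ) / ((k ! : ℝ) * ((n-k)! : ℝ)) := by
    rw [Nat.cast_choose ℝ hkn.le]
  have hkf : (k ! : ℝ) ≠ 0 := by positivity
  have hmf : ((n-k)! : ℝ) ≠ 0 := by positivity
  have harg : 2 * π * K * M / N = 2*π*K*M/N := by ring
  rw [bernoulliProb, hpow, hchoose, harg]
  rw [div_mul_eq_mul_div, div_mul_eq_mul_div, div_mul_eq_mul_div, div_mul_eq_mul_div,
    div_eq_iff (by positivity)]
  calc (n ! : ℝ) * p^k * (1-p)^(n-k) * Real.sqrt (2*π*K*M/N) * ((K/(N*p))^k * (M/(N*(1-p)))^(n-k))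
      = (n ! : ℝ) * ((p^k * (K/(N*p))^k)) * ((1-p)^(n-k) * (M/(N*(1-p)))^(n-k))
        * Real.sqrt (2*π*K*M/N) := by ring
    _ = (n ! : ℝ) * (K/N)^k * (M/N)^(n-k) * Real.sqrt (2*π*K*M/N) := by rw [e1, e2]
    _ = (k ! : ℝ) * ((n-k)! : ℝ) * Real.exp (dS n - dS k - dS (n-k)) := hfact
    _ = Real.exp (dS n - dS k - dS (n-k)) * ((k ! : ℝ) * ((n-k)! : ℝ)) := by ring

theorem bernoulli_prob_stirling_estimate
    (n k : ℕ) (hk : 0 < k) (hkn : k < n) (p : ℝ) (hp0 : 0 < p) (hp1 : p < 1) :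
    Real.exp (-(1 / (12 * k)) - 1 / (12 * (n - k : ℕ)))
        < bernoulliProb p k n * Real.sqrt (2 * Real.pi * k * (n - k : ℕ) / n) *
            (2 : ℝ) ^ (n * klBin ((k : ℝ) / n) p) ∧
      bernoulliProb p k n * Real.sqrt (2 * Real.pi * k * (n - k : ℕ) / n) *
          (2 : ℝ) ^ (n * klBin ((k : ℝ) / n) p) < 1 := by
  have hmain := main_eq n k hk hkn p hp0 hp1
  have hK : (0:ℝ) < (k:ℝ) := by exact_mod_cast hk
  have hK1 : (1:ℝ) ≤ (k:ℝ) := by exact_mod_cast hk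
  have hM : (0:ℝ) < ((n-k:ℕ):ℝ) := by
    have : 0 < n - k := by omega
    exact_mod_cast this
  have hM1 : (1:ℝ) ≤ ((n-k:ℕ):ℝ) := by
    have : 1 ≤ n - k := by omega
    exact_mod_cast this
  have hN : (0:ℝ) < (n:ℝ) := by
    have : 0 < n := by omega
    exact_mod_cast this
  have hKM : (k:ℝ) + ((n-k:ℕ):ℝ) = (n:ℝ) := by
    have : k + (n - k) = n := by omega
    exact_mod_cast congrArg (Nat.cast : ℕ → ℝ) this
  have h1 := dS_le' n (by omega)
  have h2 := dS_ge' k hk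
  have h3 := dS_ge' (n-k) (by omega)
  have h4 := dS_ge' n (by omega)
  have h5 := dS_le' k hk
  have h6 := dS_le' (n-k) (by omega)
  set K : ℝ := (k:ℝ)
  set M : ℝ := ((n-k:ℕ):ℝ)
  set N : ℝ := (n:ℝ)
  rw [hmain]
  constructor
  · apply Real.exp_lt_exp.mpr
    have hpos : (0:ℝ) < 1/(12*N+1) := by positivity
    linarith
  · rw [← Real.exp_zero]
    apply Real.exp_lt_exp.mpr
    have hcr : 1/(12*N) < 1/(12*K+1) + 1/(12*M+1) := by
      rw [div_add_div _ _ (by positivity) (by positivity),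
        div_lt_div_iff₀ (by positivity) (by positivity), ← hKM]
      nlinarith [mul_pos hK hM, sq_nonneg (K+M)]
    linarith
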